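/- arXiv:2509.01833 — 5 statements merged into one kernel-verified Lean document; each statement's English description precedes it below -/
import Mathlib

section
/- Let L ≥ 1, let b : ℤ → ℝ be L-periodic with period sum C = ∑_{i=0}^{L-1} b(i), and suppose E : ℤ → ℝ has a motion event on [i₁, i₂] of duration M = i₂ − i₁ + 1. Then the set {n ∈ ℤ : W_E(n) ≠ C} is contained in the integer interval [i₁ − L + 1, i₂] and therefore has at most M + L − 1 elements. -/
/-- Window-summed spoke energy: `W L E n = ∑_{i=0}^{L-1} E (n+i)`. -/
def windowSum (L : ℕ) (E : ℤ → ℝ) (n : ℤ) : ℝ :=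
  ∑ i ∈ Finset.range L, E (n + i)

lemma periodic_window_sum (L : ℕ) (b : ℤ → ℝ) (hb : ∀ i : ℤ, b (i + L) = b i) :
    ∀ n : ℤ, ∑ i ∈ Finset.range L, b (n + i) = ∑ i ∈ Finset.range L, b i := by
  have key : ∀ n : ℤ, ∑ i ∈ Finset.range L, b ((n + 1) + i)
      = ∑ i ∈ Finset.range L, b (n + i) := by
    intro n
    have h1 := Finset.sum_range_succ (fun i : ℕ => b (n + i)) L
    have h2 := Finset.sum_range_succ' (fun i : ℕ => b (n + i)) L
    have h3 : ∑ i ∈ Finset.range L, b (n + ↑(i + 1)) =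
        ∑ i ∈ Finset.range L, b ((n + 1) + i) := by
      apply Finset.sum_congr rfl
      intro i _
      congr 1
      push_cast
      ring
    have hper : b (n + L) = b n := hb n
    rw [h3] at h2
    have := h1.symm.trans h2
    -- this : ∑ range L, b (n+i) + b (n+L) = ∑ range L, b ((n+1)+i) + b (n+0)
    simp only [Nat.cast_zero, add_zero] at this
    linarith [this, hper]
  intro n
  induction n using Int.induction_on with
  | zero => simp
  | succ k ih => rw [key k]; exact ih
  | pred k ih => rw [← ih, ← key (-(k : ℤ) - 1)]; norm_num

/-- the set of window indices where the window-summed spoke energy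
deviates from the baseline value `C` is contained in `[i₁ - L + 1, i₂]`, hence
has at most `M + L - 1` elements, where `M = i₂ - i₁ + 1`. -/
theorem windowSum_deviation_subset_and_card
    (L : ℕ) (hL : 1 ≤ L)
    (b : ℤ → ℝ) (hb : ∀ i : ℤ, b (i + L) = b i)
    (C : ℝ) (hC : C = ∑ i ∈ Finset.range L, b i)
    (E : ℤ → ℝ) (i₁ i₂ : ℤ) (hi : i₁ ≤ i₂)
    (hbefore : ∀ i : ℤ, i < i₁ → E i = b i)
    (hafter : ∀ i : ℤ, i₂ < i → E i = b i)
    (M : ℤ) (hM : M = i₂ - i₁ + 1) :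
    {n : ℤ | windowSum L E n ≠ C} ⊆ Set.Icc (i₁ - L + 1) i₂ ∧
    ({n : ℤ | windowSum L E n ≠ C}.ncard : ℤ) ≤ M + L - 1 := by
  have hsub : {n : ℤ | windowSum L E n ≠ C} ⊆ Set.Icc (i₁ - L + 1) i₂ := by
    intro n hn
    by_contra hnot
    apply hn
    unfold windowSum
    have heq : ∀ i ∈ Finset.range L, E (n + i) = b (n + i) := by
      intro i hiL
      rw [Set.mem_Icc, not_and_or, not_le, not_le] at hnot
      rcases hnot with h | h
      · apply hbefore
        have : (i : ℤ) ≤ (L : ℤ) - 1 := by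
          have := Finset.mem_range.mp hiL
          omega
        omega
      · apply hafter
        have : (0 : ℤ) ≤ (i : ℤ) := Int.natCast_nonneg i
        omega
    rw [Finset.sum_congr rfl heq, periodic_window_sum L b hb n, hC]
  refine ⟨hsub, ?_⟩
  have hfin : (Set.Icc (i₁ - (L : ℤ) + 1) i₂).Finite := Set.finite_Icc _ _
  have hcard : ({n : ℤ | windowSum L E n ≠ C}).ncard ≤
      (Set.Icc (i₁ - (L : ℤ) + 1) i₂).ncard := Set.ncard_le_ncard hsub hfin
  have hIcc : (Set.Icc (i₁ - (L : ℤ) + 1) i₂).ncard = (i₂ + 1 - (i₁ - L + 1)).toNat := by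
    rw [← Finset.coe_Icc, Set.ncard_coe_finset, Int.card_Icc]
  have hnonneg : (0 : ℤ) ≤ i₂ + 1 - (i₁ - L + 1) := by omega
  have : ((i₂ + 1 - (i₁ - L + 1)).toNat : ℤ) = i₂ + 1 - (i₁ - L + 1) :=
    Int.toNat_of_nonneg hnonneg
  calc ({n : ℤ | windowSum L E n ≠ C}.ncard : ℤ)
      ≤ ((Set.Icc (i₁ - (L : ℤ) + 1) i₂).ncard : ℤ) := by exact_mod_cast hcard
    _ = i₂ + 1 - (i₁ - L + 1) := by rw [hIcc, this]
    _ ≤ M + L - 1 := by omega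
end

section
/- Let L ≥ 1, let b : ℤ → ℝ be L-periodic with period sum C = ∑_{i=0}^{L-1} b(i), and let E : ℤ → ℝ. Suppose there exists i₀ ∈ ℤ with E(i) = b(i) for all i ≤ i₀ (initial stillness), and suppose W_E(n) = C for every n ≤ j₁. Then E(i) = b(i) for every i ≤ j₁ + L − 1; that is, any deviation of E from the baseline (motion onset) occurs no earlier than spoke index j₁ + L. -/
lemma windowSum_periodic (L : ℕ) (b : ℤ → ℝ) (hb : ∀ i : ℤ, b (i + L) = b i) :
    ∀ n : ℤ, windowSum L b n = windowSum L b 0 := by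
  have step : ∀ n : ℤ, windowSum L b (n + 1) = windowSum L b n := by
    intro n
    unfold windowSum
    have h1 : ∑ i ∈ Finset.range L, b (n + 1 + (i : ℤ))
        = ∑ i ∈ Finset.range L, b (n + ((i : ℤ) + 1)) := by
      apply Finset.sum_congr rfl
      intro i _
      ring_nf
    rw [h1]
    have h2 : ∑ i ∈ Finset.range L, b (n + ((i : ℤ) + 1))
        = ∑ i ∈ Finset.range L, (fun k : ℕ => b (n + (k : ℤ))) (i + 1) := by
      apply Finset.sum_congr rfl
      intro i _
      push_cast
      ring_nf
    rw [h2]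
    have h3 := Finset.sum_range_succ' (fun k : ℕ => b (n + (k : ℤ))) L
    have h4 := Finset.sum_range_succ (fun k : ℕ => b (n + (k : ℤ))) L
    have hbL : b (n + (L : ℤ)) = b n := hb n
    have h5 : ∑ i ∈ Finset.range L, (fun k : ℕ => b (n + (k : ℤ))) (i + 1)
        = ∑ k ∈ Finset.range L, b (n + (↑(k+1) : ℤ)) := by
      apply Finset.sum_congr rfl; intro i _; push_cast; ring_nf
    rw [h5]
    simp only [Nat.cast_zero, add_zero] at h3
    linarith [h3, h4, hbL]
  intro n
  induction n using Int.induction_on with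
  | zero => rfl
  | succ k ih => rw [step k, ih]
  | pred k ih =>
    have := step (-(k:ℤ) - 1)
    simp only [sub_add_cancel] at this
    rw [← this]; exact ih

/-- if the subject is initially still and the window-summed spoke
energy equals the baseline value `C` for all window indices `n ≤ j₁`, then the
spoke energy equals the baseline for all spoke indices `i ≤ j₁ + L - 1`;
i.e., motion onset occurs no earlier than spoke index `j₁ + L`. -/
theorem motion_onset_no_earlier
    (L : ℕ) (hL : 1 ≤ L)
    (b : ℤ → ℝ) (hb : ∀ i : ℤ, b (i + L) = b i)
    (C : ℝ) (hC : C = ∑ i ∈ Finset.range L, b i)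
    (E : ℤ → ℝ)
    (i₀ : ℤ) (hstill : ∀ i : ℤ, i ≤ i₀ → E i = b i)
    (j₁ : ℤ) (hW : ∀ n : ℤ, n ≤ j₁ → windowSum L E n = C) :
    ∀ i : ℤ, i ≤ j₁ + L - 1 → E i = b i := by
  -- window sum of b is always C
  have hWb : ∀ n : ℤ, windowSum L b n = C := by
    intro n
    rw [windowSum_periodic L b hb n, hC]
    unfold windowSum
    simp
  -- window sum of D := E - b is 0 for n ≤ j₁
  set D : ℤ → ℝ := fun i => E i - b i with hD
  have hWD : ∀ n : ℤ, n ≤ j₁ → ∑ i ∈ Finset.range L, D (n + i) = 0 := by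
    intro n hn
    have : ∑ i ∈ Finset.range L, D (n + i)
        = windowSum L E n - windowSum L b n := by
      unfold windowSum
      rw [← Finset.sum_sub_distrib]
    rw [this, hW n hn, hWb n]
    ring
  have hDstill : ∀ i : ℤ, i ≤ i₀ → D i = 0 := by
    intro i hi; simp [hD, hstill i hi]
  -- main: ∀ m : ℕ, ∀ i ≤ j₁ + L - 1, i ≤ i₀ + m → D i = 0
  have key : ∀ m : ℕ, ∀ i : ℤ, i ≤ j₁ + L - 1 → i ≤ i₀ + m → D i = 0 := by
    intro m
    induction m with
    | zero => intro i _ hi; exact hDstill i (by simpa using hi)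
    | succ m ih =>
      intro i hij hi
      by_cases hcase : i ≤ i₀ + m
      · exact ih i hij hcase
      · -- use the window at n = i - L + 1
        have hn : i - L + 1 ≤ j₁ := by omega
        have hw := hWD (i - L + 1) hn
        obtain ⟨L', rfl⟩ : ∃ L', L = L' + 1 := ⟨L - 1, by omega⟩
        rw [Finset.sum_range_succ] at hw
        have hlast : (i - (L' + 1 : ℕ) + 1 + (L' : ℤ)) = i := by push_cast; ring
        rw [hlast] at hw
        have hrest : ∑ k ∈ Finset.range L', D (i - (L' + 1 : ℕ) + 1 + k) = 0 := by
          apply Finset.sum_eq_zero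
          intro k hk
          simp only [Finset.mem_range] at hk
          apply ih
          · push_cast; omega
          · push_cast; omega
        rw [hrest] at hw
        linarith [hw]
  intro i hi
  have hm : ∃ m : ℕ, i ≤ i₀ + m := ⟨(i - i₀).toNat, by omega⟩
  obtain ⟨m, hm⟩ := hm
  have := key m i hi hm
  simp only [hD] at this
  linarith [this]
end

section
/- Let L ≥ 1, let b : ℤ → ℝ be L-periodic with period sum C = ∑_{i=0}^{L-1} b(i), and let E : ℤ → ℝ. Suppose there exists i∞ ∈ ℤ with E(i) = b(i) for all i ≥ i∞ (eventual stillness), and suppose W_E(n) = C for every n ≥ j₂. Then E(i) = b(i) for every i ≥ j₂; that is, any deviation of E from the baseline (motion) has ended no later than spoke index j₂ − 1. -/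
/-- if the subject is eventually still and the window-summed spoke
energy equals the baseline value `C` for all window indices `n ≥ j₂`, then the
spoke energy equals the baseline for all spoke indices `i ≥ j₂`;
i.e., motion has ended no later than spoke index `j₂ - 1`. -/
theorem motion_ends_no_later
    (L : ℕ) (hL : 1 ≤ L)
    (b : ℤ → ℝ) (hb : ∀ i : ℤ, b (i + L) = b i)
    (C : ℝ) (hC : C = ∑ i ∈ Finset.range L, b i)
    (E : ℤ → ℝ)
    (iend : ℤ) (hstill : ∀ i : ℤ, iend ≤ i → E i = b i)
    (j₂ : ℤ) (hW : ∀ n : ℤ, j₂ ≤ n → windowSum L E n = C) :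
    ∀ i : ℤ, j₂ ≤ i → E i = b i := by
  -- baseline window sum is constant
  have hS : ∀ n : ℤ, ∑ i ∈ Finset.range L, b (n + i) = C := by
    have step : ∀ n : ℤ, ∑ i ∈ Finset.range L, b ((n + 1) + i)
        = ∑ i ∈ Finset.range L, b (n + i) := by
      intro n
      obtain ⟨L', rfl⟩ : ∃ L', L = L' + 1 := ⟨L - 1, (Nat.succ_pred_eq_of_pos hL).symm⟩
      rw [Finset.sum_range_succ (fun i => b ((n+1) + i)),
        Finset.sum_range_succ' (fun i => b (n + i))]
      congr 1
      · apply Finset.sum_congr rfl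
        intro k _
        congr 1
        push_cast
        ring
      · have := hb n
        rw [show (n + 1 + (L':ℕ) : ℤ) = n + (L' + 1 : ℕ) by push_cast; ring]
        simpa using this
    intro n
    induction n using Int.induction_on with
    | zero => simpa using hC.symm
    | succ k ih => rw [step] ; exact ih
    | pred k ih => rw [← ih, ← step (-(k:ℤ) - 1)]; ring_nf
  suffices h : ∀ m : ℕ, ∀ i : ℤ, j₂ ≤ i → iend - i ≤ m → E i = b i by
    intro i hi
    rcases le_or_gt iend i with h' | h'
    · exact hstill i h'
    · exact h (iend - i).toNat i hi (le_of_eq (Int.toNat_of_nonneg (by omega)).symm)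
  intro m
  induction m with
  | zero => intro i hi h0; exact hstill i (by omega)
  | succ m ih =>
    intro i hi hm
    rcases le_or_gt iend i with h' | h'
    · exact hstill i h'
    · have hWi := hW i hi
      unfold windowSum at hWi
      obtain ⟨L', rfl⟩ : ∃ L', L = L' + 1 := ⟨L - 1, (Nat.succ_pred_eq_of_pos hL).symm⟩
      rw [Finset.sum_range_succ' (fun k => E (i + k))] at hWi
      have hrest : ∀ k ∈ Finset.range L', E (i + (k + 1 : ℕ)) = b (i + (k + 1 : ℕ)) := by
        intro k _
        exact ih (i + (k + 1 : ℕ)) (by omega) (by omega)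
      rw [Finset.sum_congr rfl hrest] at hWi
      have hSb := hS i
      rw [Finset.sum_range_succ' (fun k => b (i + k))] at hSb
      have : E (i + (0:ℕ)) = b (i + (0:ℕ)) := by linarith
      simpa using this
end

section
/- (Fourier Slice Theorem in 3D.) Let f : ℝ³ → ℂ be a Schwartz function and let u ∈ ℝ³ be a unit vector. Let p_{f,u}(t) = ∫_{u^⊥} f(t·u + s) ds be the projection of f along u. Then for every k ∈ ℝ, the one-dimensional Fourier transform of the projection equals the restriction of the three-dimensional Fourier transform of f to the line through the origin in direction u: 𝓕₁(p_{f,u})(k) = 𝓕₃f(k·u). -/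
open MeasureTheory Module
open scoped FourierTransform RealInnerProductSpace

/-- The projection of `f : ℝ³ → ℂ` along a direction `u`:
`p_{f,u}(t) = ∫_{u^⊥} f (t • u + s) ds`, the integral being over the orthogonal
complement of `u` with its canonical Haar (Lebesgue) measure. -/
noncomputable def proj (f : EuclideanSpace ℝ (Fin 3) → ℂ)
    (u : EuclideanSpace ℝ (Fin 3)) (t : ℝ) : ℂ :=
  ∫ s : (ℝ ∙ u)ᗮ, f (t • u + (s : EuclideanSpace ℝ (Fin 3)))

noncomputable section


abbrev E3 := EuclideanSpace ℝ (Fin 3)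

variable (u : E3)

-- orthonormal basis of the orthogonal complement
lemma finrank_perp (hu : ‖u‖ = 1) : finrank ℝ ((ℝ ∙ u)ᗮ : Submodule ℝ E3) = 2 := by
  have hu0 : u ≠ 0 := by intro h; simp [h] at hu
  have h1 : finrank ℝ (ℝ ∙ u : Submodule ℝ E3) = 1 := finrank_span_singleton hu0
  have h2 := Submodule.finrank_add_finrank_orthogonal (K := (ℝ ∙ u : Submodule ℝ E3))
  have h3 : finrank ℝ E3 = 3 := by simp [finrank_euclideanSpace]
  omega

def perpBasis (hu : ‖u‖ = 1) : OrthonormalBasis (Fin 2) ℝ ((ℝ ∙ u)ᗮ : Submodule ℝ E3) :=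
  (stdOrthonormalBasis ℝ _).reindex (finCongr (finrank_perp u hu))

lemma orthonormal_cons (hu : ‖u‖ = 1) :
    Orthonormal ℝ (Fin.cons u (fun j => ((perpBasis u hu j : E3))) : Fin 3 → E3) := by
  rw [orthonormal_iff_ite]
  intro i j
  have humem : u ∈ (ℝ ∙ u : Submodule ℝ E3) := Submodule.mem_span_singleton_self u
  have hperp : ∀ j : Fin 2, ⟪u, ((perpBasis u hu j : E3))⟫ = 0 := fun j =>
    (perpBasis u hu j).2 u humem
  have hon := (perpBasis u hu).orthonormal
  rw [orthonormal_iff_ite] at hon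
  refine Fin.cases ?_ ?_ i <;> [skip; intro i'] <;>
    refine Fin.cases ?_ ?_ j <;> [skip; intro j'; skip; intro j']
  · simp only [Fin.cons_zero, if_pos rfl]
    rw [real_inner_self_eq_norm_sq, hu]; norm_num
  · simpa [(Fin.succ_ne_zero j').symm] using hperp j'
  · rw [real_inner_comm]; simpa [Fin.succ_ne_zero] using hperp i'
  · have := hon i' j'
    rw [Submodule.coe_inner] at this  -- maybe wrong direction
    simpa [Fin.succ_inj] using this

def fullBasis (hu : ‖u‖ = 1) : OrthonormalBasis (Fin 3) ℝ E3 :=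
  (basisOfOrthonormalOfCardEqFinrank (orthonormal_cons u hu)
      (by simp [finrank_euclideanSpace])).toOrthonormalBasis
    (by rw [coe_basisOfOrthonormalOfCardEqFinrank]; exact orthonormal_cons u hu)

lemma fullBasis_apply (hu : ‖u‖ = 1) (i : Fin 3) :
    fullBasis u hu i = (Fin.cons u (fun j => ((perpBasis u hu j : E3))) : Fin 3 → E3) i := by
  simp [fullBasis, Basis.coe_toOrthonormalBasis, coe_basisOfOrthonormalOfCardEqFinrank]

def sliceEquiv (hu : ‖u‖ = 1) : (ℝ × ((ℝ ∙ u)ᗮ : Submodule ℝ E3)) ≃ᵐ E3 :=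
  ((MeasurableEquiv.refl ℝ).prodCongr (perpBasis u hu).measurableEquiv).trans <|
  ((MeasurableEquiv.refl ℝ).prodCongr (MeasurableEquiv.toLp 2 (Fin 2 → ℝ)).symm).trans <|
  ((MeasurableEquiv.piFinSuccAbove (fun _ : Fin 3 => ℝ) 0).symm).trans <|
  ((MeasurableEquiv.toLp 2 (Fin 3 → ℝ)).symm.symm.trans
    (fullBasis u hu).measurableEquiv.symm)

lemma sliceEquiv_measurePreserving (hu : ‖u‖ = 1) :
    MeasurePreserving (sliceEquiv u hu) volume volume := by
  have h1 : MeasurePreserving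
      ((MeasurableEquiv.refl ℝ).prodCongr (perpBasis u hu).measurableEquiv) volume volume :=
    (MeasurePreserving.id volume).prod
      (perpBasis u hu).measurePreserving_measurableEquiv
  have h2 : MeasurePreserving
      ((MeasurableEquiv.refl ℝ).prodCongr (MeasurableEquiv.toLp 2 (Fin 2 → ℝ)).symm)
      volume volume :=
    (MeasurePreserving.id volume).prod
      (EuclideanSpace.volume_preserving_symm_measurableEquiv_toLp (Fin 2))
  have h3 : MeasurePreserving
      ((MeasurableEquiv.piFinSuccAbove (fun _ : Fin 3 => ℝ) 0).symm)
      volume volume := by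
    have := (measurePreserving_piFinSuccAbove (fun _ : Fin 3 => (volume : Measure ℝ)) 0).symm
    simpa [volume_pi, Measure.volume_eq_prod] using this
  have h4 : MeasurePreserving ((MeasurableEquiv.toLp 2 (Fin 3 → ℝ)).symm.symm)
      volume volume := (EuclideanSpace.volume_preserving_symm_measurableEquiv_toLp (Fin 3)).symm
  have h5 : MeasurePreserving ((fullBasis u hu).measurableEquiv.symm) volume volume :=
    ((fullBasis u hu).measurePreserving_measurableEquiv).symm _
  exact ((h5.comp h4).comp h3).comp (h2.comp h1)

lemma sliceEquiv_apply (hu : ‖u‖ = 1) (t : ℝ) (s : ((ℝ ∙ u)ᗮ : Submodule ℝ E3)) :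
    sliceEquiv u hu (t, s) = t • u + (s : E3) := by
  have key : ∀ x : EuclideanSpace ℝ (Fin 3),
      (fullBasis u hu).repr.symm x = ∑ i, x i • fullBasis u hu i :=
    fun x => ((fullBasis u hu).sum_repr_symm x).symm
  show (fullBasis u hu).repr.symm _ = _
  rw [key, Fin.sum_univ_succ]
  have hx : ∀ i : Fin 3,
      ((MeasurableEquiv.toLp 2 (Fin 3 → ℝ)).symm.symm.toEquiv
        ((MeasurableEquiv.piFinSuccAbove (fun _ => ℝ) 0).symm.toEquiv
          (((MeasurableEquiv.refl ℝ).prodCongr (MeasurableEquiv.toLp 2 (Fin 2 → ℝ)).symm).toEquiv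
            (((MeasurableEquiv.refl ℝ).prodCongr (perpBasis u hu).measurableEquiv).toEquiv (t, s))))) i
      = (Fin.cons t (fun j => (perpBasis u hu).repr s j) : Fin 3 → ℝ) i := by
    intro i
    induction i using Fin.cases <;> rfl
  simp_rw [hx, Fin.cons_zero, Fin.cons_succ]
  have hc0 : fullBasis u hu 0 = u := by rw [fullBasis_apply]; rfl
  have hcs : ∀ j : Fin 2, fullBasis u hu j.succ = (perpBasis u hu j : E3) := by
    intro j; rw [fullBasis_apply]; simp
  rw [hc0]
  simp_rw [hcs]
  congr 1
  conv_rhs => rw [← (perpBasis u hu).sum_repr s]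
  simp [Submodule.coe_sum]


/-- Fourier Slice Theorem in 3D: for a Schwartz function `f` on ℝ³
and a unit vector `u`, the 1D Fourier transform of the projection of `f` along `u`
equals the restriction of the 3D Fourier transform of `f` to the line through the
origin in direction `u`: `𝓕₁(p_{f,u})(k) = 𝓕₃ f (k • u)`. -/
theorem fourier_slice_theorem
    (f : SchwartzMap (EuclideanSpace ℝ (Fin 3)) ℂ)
    (u : EuclideanSpace ℝ (Fin 3)) (hu : ‖u‖ = 1) :
    ∀ k : ℝ, 𝓕 (proj (⇑f) u) k = 𝓕 (⇑f) (k • u) := by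
  intro k
  have hMP := sliceEquiv_measurePreserving u hu
  set Φ := sliceEquiv u hu with hΦ
  set F : E3 → ℂ := fun x => 𝐞 (-⟪x, k • u⟫) • f x with hF
  have hfint : Integrable (⇑f) volume := f.integrable
  have hFint : Integrable F volume := (Real.fourierIntegral_convergent_iff (k • u)).2 hfint
  have huu : ⟪u, u⟫ = 1 := by
    rw [real_inner_self_eq_norm_sq, hu]; norm_num
  have hcomp : ∀ p : ℝ × ((ℝ ∙ u)ᗮ : Submodule ℝ E3),
      F (Φ p) = 𝐞 (-(p.1 * k)) • f (p.1 • u + (p.2 : E3)) := by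
    rintro ⟨t, s⟩
    rw [hF]
    simp only [hΦ, sliceEquiv_apply u hu t s]
    have hz : ⟪(s : E3), u⟫ = 0 := by
      rw [real_inner_comm]
      exact s.2 u (Submodule.mem_span_singleton_self u)
    have : ⟪t • u + (s : E3), k • u⟫ = t * k := by
      rw [inner_add_left, real_inner_smul_left, real_inner_smul_right,
        real_inner_smul_right, huu, hz]
      ring
    rw [this]
  have step1 : 𝓕 (proj (⇑f) u) k
      = ∫ t : ℝ, ∫ s : ((ℝ ∙ u)ᗮ : Submodule ℝ E3), 𝐞 (-(t * k)) • f (t • u + (s : E3)) := by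
    rw [Real.fourier_eq]
    congr 1
    funext t
    rw [show ⟪t, k⟫ = t * k from by simp [mul_comm], proj]
    simp_rw [Circle.smul_def]
    exact (integral_const_mul _ _).symm
  have hGint : Integrable (F ∘ Φ) volume :=
    (hMP.integrable_comp_emb Φ.measurableEmbedding).2 hFint
  rw [MeasureTheory.Measure.volume_eq_prod] at hGint
  have hGint' : Integrable (fun p : ℝ × ((ℝ ∙ u)ᗮ : Submodule ℝ E3) => F (Φ p))
      (volume.prod volume) := hGint
  have step2 : ∫ p : ℝ × ((ℝ ∙ u)ᗮ : Submodule ℝ E3), F (Φ p)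
      = ∫ t : ℝ, ∫ s : ((ℝ ∙ u)ᗮ : Submodule ℝ E3), 𝐞 (-(t * k)) • f (t • u + (s : E3)) := by
    rw [MeasureTheory.Measure.volume_eq_prod, MeasureTheory.integral_prod _ hGint']
    simp_rw [hcomp]
  have step3 : ∫ p : ℝ × ((ℝ ∙ u)ᗮ : Submodule ℝ E3), F (Φ p) = ∫ x : E3, F x :=
    hMP.integral_comp Φ.measurableEmbedding F
  rw [step1, ← step2, step3, hF, ← Real.fourier_eq]

end
end

section
/- (Spoke energy equals projection energy.) Let f : ℝ³ → ℂ be a Schwartz function and let u ∈ ℝ³ be a unit vector. Then the energy of the k-space radial spoke in direction u equals the energy of the corresponding image-space projection: ∫_ℝ |𝓕₃f(k·u)|² dk = ∫_ℝ |p_{f,u}(t)|² dt. -/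
open MeasureTheory
open scoped FourierTransform

open Complex
open scoped RealInnerProductSpace

private lemma aux_inner0 (u : EuclideanSpace ℝ (Fin 3)) :
    ∀ s : ((ℝ ∙ u)ᗮ : Submodule ℝ (EuclideanSpace ℝ (Fin 3))),
      ⟪u, (s : EuclideanSpace ℝ (Fin 3))⟫ = 0 := by
  intro s
  rw [real_inner_comm]
  exact Submodule.mem_orthogonal_singleton_iff_inner_left.mp s.2

private lemma aux_dim (u : EuclideanSpace ℝ (Fin 3)) (hu : ‖u‖ = 1) :
    Module.finrank ℝ ((ℝ ∙ u)ᗮ : Submodule ℝ (EuclideanSpace ℝ (Fin 3))) = 2 := by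
  have hu0 : u ≠ 0 := by intro h; rw [h, norm_zero] at hu; norm_num at hu
  have h1 := Submodule.finrank_add_finrank_orthogonal (𝕜 := ℝ) (ℝ ∙ u)
  have h2 : Module.finrank ℝ (EuclideanSpace ℝ (Fin 3)) = 3 := finrank_euclideanSpace_fin
  rw [finrank_span_singleton hu0, h2] at h1
  omega

set_option maxHeartbeats 1000000 in
private lemma phi_spec (u : EuclideanSpace ℝ (Fin 3)) (hu : ‖u‖ = 1) :
    MeasurePreserving
      (fun p : ℝ × ((ℝ ∙ u)ᗮ : Submodule ℝ (EuclideanSpace ℝ (Fin 3))) =>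
        p.1 • u + (p.2 : EuclideanSpace ℝ (Fin 3)))
      (volume.prod volume) volume ∧
    MeasurableEmbedding
      (fun p : ℝ × ((ℝ ∙ u)ᗮ : Submodule ℝ (EuclideanSpace ℝ (Fin 3))) =>
        p.1 • u + (p.2 : EuclideanSpace ℝ (Fin 3))) := by
  have hdim := aux_dim u hu
  let c : OrthonormalBasis (Fin 2) ℝ ((ℝ ∙ u)ᗮ : Submodule ℝ (EuclideanSpace ℝ (Fin 3))) :=
    (stdOrthonormalBasis ℝ _).reindex (finCongr hdim)
  have hs0 := aux_inner0 u
  have hcn : ∀ i, ‖((c i : (ℝ ∙ u)ᗮ) : EuclideanSpace ℝ (Fin 3))‖ = 1 := fun i => c.orthonormal.1 i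
  have h01 : ⟪((c 0 : (ℝ ∙ u)ᗮ) : EuclideanSpace ℝ (Fin 3)),
      ((c 1 : (ℝ ∙ u)ᗮ) : EuclideanSpace ℝ (Fin 3))⟫ = 0 := by
    rw [← Submodule.coe_inner]
    exact c.orthonormal.2 (by norm_num)
  have hon : Orthonormal ℝ ![u, c 0, c 1] := by
    constructor
    · intro i
      fin_cases i
      · exact hu
      · exact hcn 0
      · exact hcn 1
    · intro i j hij
      fin_cases i <;> fin_cases j <;>
        first
          | exact absurd rfl hij
          | exact hs0 _
          | (rw [real_inner_comm]; exact hs0 _)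
          | exact h01
          | (rw [real_inner_comm]; exact h01)
  let bb : Module.Basis (Fin 3) ℝ (EuclideanSpace ℝ (Fin 3)) :=
    basisOfLinearIndependentOfCardEqFinrank hon.linearIndependent
      (by simp [finrank_euclideanSpace_fin])
  have hbb : ⇑bb = ![u, c 0, c 1] := coe_basisOfLinearIndependentOfCardEqFinrank _ _
  let b : OrthonormalBasis (Fin 3) ℝ (EuclideanSpace ℝ (Fin 3)) :=
    bb.toOrthonormalBasis (by rw [hbb]; exact hon)
  have hb : ⇑b = ![u, c 0, c 1] := by rw [Module.Basis.coe_toOrthonormalBasis, hbb]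
  let Ψ : (ℝ × ((ℝ ∙ u)ᗮ : Submodule ℝ (EuclideanSpace ℝ (Fin 3)))) ≃ᵐ EuclideanSpace ℝ (Fin 3) :=
    ((MeasurableEquiv.refl ℝ).prodCongr
        (c.repr.toMeasurableEquiv.trans ((MeasurableEquiv.toLp 2 (Fin 2 → ℝ)).symm))).trans
      (((MeasurableEquiv.piFinSuccAbove (fun _ : Fin 3 => ℝ) 0).symm).trans
        ((MeasurableEquiv.toLp 2 (Fin 3 → ℝ)).trans b.repr.toMeasurableEquiv.symm))
  have hΨmp : MeasurePreserving Ψ (volume.prod volume) volume := by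
    have m1 : MeasurePreserving
        (Prod.map (id : ℝ → ℝ) (fun s => ((MeasurableEquiv.toLp 2 (Fin 2 → ℝ)).symm) (c.repr s)))
        (volume.prod volume) (volume.prod volume) :=
      (MeasurePreserving.id volume).prod
        ((EuclideanSpace.volume_preserving_symm_measurableEquiv_toLp (Fin 2)).comp c.measurePreserving_repr)
    have m2 : MeasurePreserving (⇑(MeasurableEquiv.piFinSuccAbove (fun _ : Fin 3 => ℝ) 0).symm)
        (volume.prod volume) volume := by
      have h := (measurePreserving_piFinSuccAbove (fun _ : Fin 3 => (volume : Measure ℝ)) 0).symm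
        (MeasurableEquiv.piFinSuccAbove (fun _ : Fin 3 => ℝ) 0)
      simpa [volume_pi] using h
    have m3 : MeasurePreserving (⇑(MeasurableEquiv.toLp 2 (Fin 3 → ℝ))) volume volume :=
      (EuclideanSpace.volume_preserving_symm_measurableEquiv_toLp (Fin 3)).symm _
    have m4 : MeasurePreserving (⇑b.repr.toMeasurableEquiv.symm) volume volume :=
      b.measurePreserving_repr_symm
    exact ((m4.comp m3).comp m2).comp m1
  have hΨcoe : ⇑Ψ = fun p : ℝ × ((ℝ ∙ u)ᗮ : Submodule ℝ (EuclideanSpace ℝ (Fin 3))) =>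
      p.1 • u + (p.2 : EuclideanSpace ℝ (Fin 3)) := by
    funext p
    obtain ⟨t, s⟩ := p
    have h1 : Ψ (t, s) =
        b.repr.symm ((MeasurableEquiv.toLp 2 (Fin 3 → ℝ))
          (Fin.insertNth (0 : Fin 3) t (fun j => c.repr s j))) := rfl
    rw [h1]
    apply b.repr.injective
    rw [LinearIsometryEquiv.apply_symm_apply]
    refine PiLp.ext fun i => ?_
    have hX : ((MeasurableEquiv.toLp 2 (Fin 3 → ℝ))
        (Fin.insertNth (0 : Fin 3) t (fun j => c.repr s j)) : Fin 3 → ℝ) =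
        Fin.insertNth (0 : Fin 3) t (fun j => c.repr s j) := rfl
    induction i using Fin.cases with
    | zero =>
        show _ = b.repr ((t, s).1 • u + ((t, s).2 : EuclideanSpace ℝ (Fin 3))) 0
        rw [hX, Fin.insertNth_apply_same, b.repr_apply_apply]
        have hb0 : b 0 = u := by rw [hb]; rfl
        rw [hb0, inner_add_right, real_inner_smul_right, hs0,
          real_inner_self_eq_norm_mul_norm, hu]
        ring
    | succ j =>
        show _ = b.repr ((t, s).1 • u + ((t, s).2 : EuclideanSpace ℝ (Fin 3))) j.succ
        rw [hX, ← Fin.succAbove_zero, Fin.insertNth_apply_succAbove, b.repr_apply_apply]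
        have hbj : b ((0 : Fin 3).succAbove j) = ((c j : (ℝ ∙ u)ᗮ) : EuclideanSpace ℝ (Fin 3)) := by
          rw [hb, Fin.succAbove_zero]
          fin_cases j <;> rfl
        rw [hbj, inner_add_right, real_inner_smul_right]
        have hcu : ⟪((c j : (ℝ ∙ u)ᗮ) : EuclideanSpace ℝ (Fin 3)), u⟫ = 0 := by
          rw [real_inner_comm]; exact hs0 _
        rw [hcu, c.repr_apply_apply, Submodule.coe_inner]
        ring
  refine ⟨?_, ?_⟩
  · rw [← hΨcoe]; exact hΨmp
  · rw [← hΨcoe]; exact Ψ.measurableEmbedding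

private lemma aux_cont (f : SchwartzMap (EuclideanSpace ℝ (Fin 3)) ℂ)
    (u : EuclideanSpace ℝ (Fin 3)) (hu : ‖u‖ = 1) :
    Continuous (proj (⇑f) u) := by
  have hs0 := aux_inner0 u
  have hdim := aux_dim u hu
  obtain ⟨C, hC0, hC⟩ : ∃ C, 0 ≤ C ∧ ∀ x, (1 + ‖x‖) ^ 3 * ‖f x‖ ≤ C := by
    refine ⟨2 ^ 3 * ((Finset.Iic ((3,0) : ℕ × ℕ)).sup fun m => SchwartzMap.seminorm ℝ m.1 m.2) f,
      ?_, ?_⟩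
    · positivity
    · intro x
      have := SchwartzMap.one_add_le_sup_seminorm_apply (𝕜 := ℝ) (m := (3,0)) le_rfl le_rfl f x
      simpa [norm_iteratedFDeriv_zero] using this
  have hns : ∀ (t : ℝ) (s : ((ℝ ∙ u)ᗮ : Submodule ℝ (EuclideanSpace ℝ (Fin 3)))),
      ‖s‖ ≤ ‖t • u + (s : EuclideanSpace ℝ (Fin 3))‖ := by
    intro t s
    have hperp : ⟪t • u, (s : EuclideanSpace ℝ (Fin 3))⟫ = 0 := by
      rw [real_inner_smul_left, hs0]; ring
    have hsq : ‖t • u + (s : EuclideanSpace ℝ (Fin 3))‖ ^ 2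
        = ‖t • u‖ ^ 2 + ‖(s : EuclideanSpace ℝ (Fin 3))‖ ^ 2 := by
      rw [norm_add_sq_real, hperp]; ring
    have h1 : ‖(s : EuclideanSpace ℝ (Fin 3))‖ = ‖s‖ := rfl
    nlinarith [norm_nonneg (t • u + (s : EuclideanSpace ℝ (Fin 3))), norm_nonneg s,
      norm_nonneg (t • u), h1]
  have hbound : ∀ (t : ℝ) (s : ((ℝ ∙ u)ᗮ : Submodule ℝ (EuclideanSpace ℝ (Fin 3)))),
      ‖f (t • u + (s : EuclideanSpace ℝ (Fin 3)))‖ ≤ C * (1 + ‖s‖) ^ (-(3:ℝ)) := by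
    intro t s
    have h2 : (1 + ‖s‖) ^ (-(3:ℝ)) = ((1 + ‖s‖) ^ (3:ℕ))⁻¹ := by
      rw [Real.rpow_neg (by positivity), ← Real.rpow_natCast (1 + ‖s‖) 3]
      norm_num
    rw [h2, ← div_eq_mul_inv, le_div_iff₀ (by positivity)]
    calc ‖f (t • u + (s : EuclideanSpace ℝ (Fin 3)))‖ * (1 + ‖s‖) ^ (3:ℕ)
        ≤ ‖f (t • u + (s : EuclideanSpace ℝ (Fin 3)))‖
            * (1 + ‖t • u + (s : EuclideanSpace ℝ (Fin 3))‖) ^ (3:ℕ) := by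
          gcongr
          exact hns t s
      _ ≤ C := by rw [mul_comm]; exact hC _
  have hintb : Integrable (fun s : ((ℝ ∙ u)ᗮ : Submodule ℝ (EuclideanSpace ℝ (Fin 3))) =>
      C * (1 + ‖s‖) ^ (-(3:ℝ))) := by
    refine (integrable_one_add_norm ?_).const_mul C
    rw [hdim]; norm_num
  refine continuous_of_dominated (fun t => ?_) (fun t => ?_) hintb ?_
  · exact (f.continuous.comp (by fun_prop)).aestronglyMeasurable
  · exact Filter.Eventually.of_forall (hbound t)
  · exact Filter.Eventually.of_forall fun s => f.continuous.comp (by fun_prop)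

private lemma conj_char_smul (r : ℝ) (z : ℂ) :
    (starRingEnd ℂ) ((𝐞 r : Circle) • z) = (𝐞 (-r) : Circle) • (starRingEnd ℂ) z := by
  simp only [Circle.smul_def, Real.fourierChar_apply, smul_eq_mul, map_mul]
  rw [← Complex.exp_conj]
  congr 1
  simp [map_ofNat, Complex.conj_I, Complex.conj_ofReal]

/-- spoke energy equals projection energy: for a Schwartz function
`f` on ℝ³ and a unit vector `u`, the energy of the k-space radial spoke in
direction `u` equals the energy of the corresponding image-space projection:
`∫ℝ ‖𝓕₃ f (k • u)‖² dk = ∫ℝ ‖p_{f,u}(t)‖² dt`. -/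
theorem spoke_energy_eq_projection_energy
    (f : SchwartzMap (EuclideanSpace ℝ (Fin 3)) ℂ)
    (u : EuclideanSpace ℝ (Fin 3)) (hu : ‖u‖ = 1) :
    ∫ k : ℝ, ‖𝓕 (⇑f) (k • u)‖ ^ 2 = ∫ t : ℝ, ‖proj (⇑f) u t‖ ^ 2 := by
  classical
  obtain ⟨hΦmp, hΦemb⟩ := phi_spec u hu
  have hs0 := aux_inner0 u
  set g : ℝ → ℂ := proj (⇑f) u with hgdef
  have hF_int : Integrable
      (fun p : ℝ × ((ℝ ∙ u)ᗮ : Submodule ℝ (EuclideanSpace ℝ (Fin 3))) =>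
        f (p.1 • u + (p.2 : EuclideanSpace ℝ (Fin 3))))
      (volume.prod volume) := (hΦmp.integrable_comp_emb hΦemb).2 f.integrable
  have hg_int : Integrable g := by
    have h := hF_int.integral_prod_left
    exact h
  have hg_cont : Continuous g := aux_cont f u hu
  -- the spoke as a Schwartz function
  let H : SchwartzMap ℝ ℂ := SchwartzMap.compCLM ℝ
      (g := fun k : ℝ => k • u)
      ((ContinuousLinearMap.toSpanSingleton ℝ u).hasTemperateGrowth)
      ⟨1, 1, fun x => by simp [norm_smul, hu]⟩
      (SchwartzMap.fourierTransformCLE ℝ (SchwartzMap (EuclideanSpace ℝ (Fin 3)) ℂ) f)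
  have hH : ∀ k : ℝ, H k = 𝓕 (⇑f) (k • u) := by
    intro k
    have h1 : ⇑H = ⇑(SchwartzMap.fourierTransformCLE ℝ (SchwartzMap (EuclideanSpace ℝ (Fin 3)) ℂ) f) ∘ (fun k : ℝ => k • u) :=
      SchwartzMap.compCLM_apply _ _ _ _
    rw [h1]
    rfl
  -- the slice theorem
  have hslice : ∀ k : ℝ, 𝓕 g k = 𝓕 (⇑f) (k • u) := by
    intro k
    have hint : Integrable (Function.uncurry
        (fun (t : ℝ) (s : ((ℝ ∙ u)ᗮ : Submodule ℝ (EuclideanSpace ℝ (Fin 3)))) =>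
          (𝐞 (-(t * k)) : Circle) • f (t • u + (s : EuclideanSpace ℝ (Fin 3)))))
        (volume.prod volume) := by
      refine hF_int.norm.mono' ?_ ?_
      · refine Continuous.aestronglyMeasurable ?_
        refine Continuous.smul ?_ (f.continuous.comp (by fun_prop))
        exact continuous_subtype_val.comp (Real.continuous_fourierChar.comp (f := fun p : ℝ × ((ℝ ∙ u)ᗮ : Submodule ℝ (EuclideanSpace ℝ (Fin 3))) => -(p.1 * k)) (by fun_prop))
      · refine Filter.Eventually.of_forall fun p => ?_
        simp [Function.uncurry, norm_smul]
    calc 𝓕 g k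
        = ∫ t : ℝ, (𝐞 (-⟪t, k⟫) : Circle) • g t := Real.fourier_eq g k
      _ = ∫ t : ℝ, ∫ s : ((ℝ ∙ u)ᗮ : Submodule ℝ (EuclideanSpace ℝ (Fin 3))),
            (𝐞 (-(t * k)) : Circle) • f (t • u + (s : EuclideanSpace ℝ (Fin 3))) := by
          congr 1
          funext t
          rw [show ⟪t, k⟫ = t * k by simp [RCLike.inner_apply, mul_comm], hgdef]
          unfold proj
          simp only [Circle.smul_def]
          exact (integral_const_mul _ _).symm
      _ = ∫ p : ℝ × ((ℝ ∙ u)ᗮ : Submodule ℝ (EuclideanSpace ℝ (Fin 3))),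
            (𝐞 (-(p.1 * k)) : Circle) • f (p.1 • u + (p.2 : EuclideanSpace ℝ (Fin 3)))
            ∂(volume.prod volume) := integral_integral hint
      _ = ∫ p : ℝ × ((ℝ ∙ u)ᗮ : Submodule ℝ (EuclideanSpace ℝ (Fin 3))),
            (fun x : EuclideanSpace ℝ (Fin 3) => (𝐞 (-⟪x, k • u⟫) : Circle) • f x)
              (p.1 • u + (p.2 : EuclideanSpace ℝ (Fin 3)))
            ∂(volume.prod volume) := by
          congr 1
          funext p
          have : ⟪p.1 • u + (p.2 : EuclideanSpace ℝ (Fin 3)), k • u⟫ = p.1 * k := by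
            rw [real_inner_smul_right, inner_add_left, real_inner_smul_left,
              real_inner_self_eq_norm_mul_norm, hu]
            have : ⟪(p.2 : EuclideanSpace ℝ (Fin 3)), u⟫ = 0 := by
              rw [real_inner_comm]; exact hs0 _
            rw [this]; ring
          simp only [this]
      _ = ∫ x : EuclideanSpace ℝ (Fin 3), (𝐞 (-⟪x, k • u⟫) : Circle) • f x := by
          exact hΦmp.integral_comp hΦemb
            (fun x : EuclideanSpace ℝ (Fin 3) => (𝐞 (-⟪x, k • u⟫) : Circle) • f x)
      _ = 𝓕 (⇑f) (k • u) := (Real.fourier_eq (⇑f) (k • u)).symm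
  have hFg : 𝓕 g = ⇑H := funext fun k => by rw [hslice k, hH k]
  have hinv : ∀ t : ℝ, 𝓕⁻ (⇑H) t = g t := by
    have h1 : 𝓕⁻ (𝓕 g) = g :=
      hg_cont.fourierInv_fourier_eq hg_int (by rw [hFg]; exact H.integrable)
    intro t
    conv_rhs => rw [← h1]
    rw [hFg]
  -- final computation via Fubini
  have hswap_int : Integrable (Function.uncurry
      (fun (k : ℝ) (t : ℝ) => H k * ((𝐞 (t * k) : Circle) • (starRingEnd ℂ) (g t))))
      (volume.prod volume) := by
    refine (H.integrable.norm.mul_prod hg_int.norm).mono' ?_ ?_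
    · refine Continuous.aestronglyMeasurable ?_
      refine Continuous.mul (H.continuous.comp (by fun_prop)) ?_
      refine Continuous.smul (continuous_subtype_val.comp (Real.continuous_fourierChar.comp (f := fun p : ℝ × ℝ => p.2 * p.1) (by fun_prop))) ?_
      exact Complex.continuous_conj.comp (hg_cont.comp (by fun_prop))
    · refine Filter.Eventually.of_forall fun p => ?_
      simp [Function.uncurry, norm_smul, norm_mul]
  have key : ∫ k : ℝ, H k * (starRingEnd ℂ) (H k) = ∫ t : ℝ, g t * (starRingEnd ℂ) (g t) := by
    calc ∫ k : ℝ, H k * (starRingEnd ℂ) (H k)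
        = ∫ k : ℝ, ∫ t : ℝ, H k * ((𝐞 (t * k) : Circle) • (starRingEnd ℂ) (g t)) := by
          congr 1
          funext k
          rw [← hFg, Real.fourier_eq, ← integral_conj, ← integral_const_mul]
          congr 1
          funext t
          rw [show ⟪t, k⟫ = t * k by simp [RCLike.inner_apply, mul_comm], conj_char_smul, neg_neg]
      _ = ∫ t : ℝ, ∫ k : ℝ, H k * ((𝐞 (t * k) : Circle) • (starRingEnd ℂ) (g t)) :=
          integral_integral_swap hswap_int
      _ = ∫ t : ℝ, (∫ k : ℝ, (𝐞 (⟪k, t⟫) : Circle) • H k) * (starRingEnd ℂ) (g t) := by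
          congr 1
          funext t
          rw [← integral_mul_const]
          congr 1
          funext k
          rw [show ⟪k, t⟫ = k * t by simp [RCLike.inner_apply, mul_comm], mul_comm t k]
          simp only [Circle.smul_def, smul_eq_mul]
          ring
      _ = ∫ t : ℝ, g t * (starRingEnd ℂ) (g t) := by
          congr 1
          funext t
          rw [← Real.fourierInv_eq, hinv t]
  have hcast : ((∫ k : ℝ, ‖𝓕 (⇑f) (k • u)‖ ^ 2 : ℝ) : ℂ)
      = ((∫ t : ℝ, ‖proj (⇑f) u t‖ ^ 2 : ℝ) : ℂ) := by
    calc ((∫ k : ℝ, ‖𝓕 (⇑f) (k • u)‖ ^ 2 : ℝ) : ℂ)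
        = ∫ k : ℝ, ((‖𝓕 (⇑f) (k • u)‖ ^ 2 : ℝ) : ℂ) :=
          (integral_ofReal (f := fun k : ℝ => ‖𝓕 (⇑f) (k • u)‖ ^ 2)).symm
      _ = ∫ k : ℝ, H k * (starRingEnd ℂ) (H k) := by
          congr 1
          funext k
          rw [hH k, Complex.mul_conj']
          push_cast
          ring
      _ = ∫ t : ℝ, g t * (starRingEnd ℂ) (g t) := key
      _ = ∫ t : ℝ, ((‖proj (⇑f) u t‖ ^ 2 : ℝ) : ℂ) := by
          congr 1
          funext t
          rw [hgdef, Complex.mul_conj']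
          push_cast
          ring
      _ = ((∫ t : ℝ, ‖proj (⇑f) u t‖ ^ 2 : ℝ) : ℂ) :=
          integral_ofReal (f := fun t : ℝ => ‖proj (⇑f) u t‖ ^ 2)
  exact_mod_cast hcast
end
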